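/- Let X_1, …, X_N be i.i.d. real random variables whose common law is atomless, let Y_1, …, Y_N be i.i.d. real random variables whose common law is atomless, and suppose the vector (X_1,…,X_N) is independent of (Y_1,…,Y_N). Then the Kemeny correlation estimator ρ̂_κ(X,Y) is almost surely well defined and its expectation under this null hypothesis of independence is zero: E[ρ̂_κ(X,Y)] = 0. -/

import Mathlib

open Finset Matrix MeasureTheory ProbabilityTheory

/-- The Kemeny score matrix of a vector `X ∈ ℝ^N`. -/
noncomputable def kemenyScore {N : ℕ} (X : Fin N → ℝ) : Matrix (Fin N) (Fin N) ℝ :=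
  fun k l => if k = l then 0 else if X l ≤ X k then 1 else -1

/-- The rank-score vector: row sums of the Kemeny score matrix. -/
noncomputable def rankScore {N : ℕ} (X : Fin N → ℝ) : Fin N → ℝ :=
  fun k => ∑ l, kemenyScore X k l

/-- The centred rank-score vector `underline{X} - m_X 1`. -/
noncomputable def centredRankScore {N : ℕ} (X : Fin N → ℝ) : Fin N → ℝ :=
  fun k => rankScore X k - (∑ l, rankScore X l) / N

/-- The Kemeny correlation estimator `ρ̂_κ(X,Y)`. -/
noncomputable def rhoKemeny {N : ℕ} (X Y : Fin N → ℝ) : ℝ :=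
  (∑ k, centredRankScore X k * centredRankScore Y k) /
    (Real.sqrt (∑ k, centredRankScore X k ^ 2) *
      Real.sqrt (∑ k, centredRankScore Y k ^ 2))

/-! ### Auxiliary deterministic lemmas -/

lemma sum_centredRankScore {N : ℕ} (hN : 0 < N) (X : Fin N → ℝ) :
    ∑ k, centredRankScore X k = 0 := by
  have hNne : (N : ℝ) ≠ 0 := Nat.cast_ne_zero.mpr hN.ne'
  simp only [centredRankScore, Finset.sum_sub_distrib, Finset.sum_const, card_univ,
    Fintype.card_fin, nsmul_eq_mul]
  field_simp
  ring

lemma rankScore_lt {N : ℕ} (X : Fin N → ℝ) {k j : Fin N} (h : X k < X j) :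
    rankScore X k < rankScore X j := by
  have hkj : k ≠ j := fun e => absurd (e ▸ h) (lt_irrefl _)
  have hterm : ∀ m, kemenyScore X k m ≤ kemenyScore X j m ∨ m = k := by
    intro m
    by_cases hm : m = k
    · exact Or.inr hm
    · left
      by_cases hmj : m = j
      · subst hmj
        simp only [kemenyScore, if_neg (Ne.symm hkj), if_pos rfl]
        split_ifs <;> first | linarith | norm_num
      · simp only [kemenyScore, if_neg (fun e : k = m => hm e.symm),
          if_neg (fun e : j = m => hmj e.symm)]
        split_ifs with h1 h2 h2 <;> try norm_num
        · exact absurd (h1.trans h.le) h2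
  have hk : kemenyScore X k k < kemenyScore X j k := by
    simp only [kemenyScore, if_pos rfl, if_neg hkj.symm, if_pos h.le]
    norm_num
  have : ∑ m, kemenyScore X k m < ∑ m, kemenyScore X j m := by
    apply Finset.sum_lt_sum
    · intro m _
      rcases hterm m with hle | rfl
      · exact hle
      · exact hk.le
    · exact ⟨k, Finset.mem_univ k, hk⟩
  exact this

lemma sum_sq_centred_pos {N : ℕ} (hN : 2 ≤ N) {X : Fin N → ℝ}
    (hinj : ∀ i j : Fin N, i ≠ j → X i ≠ X j) :
    0 < ∑ k, centredRankScore X k ^ 2 := by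
  have h01 : (⟨0, by omega⟩ : Fin N) ≠ ⟨1, by omega⟩ := by
    simp [Fin.ext_iff]
  set i0 : Fin N := ⟨0, by omega⟩
  set i1 : Fin N := ⟨1, by omega⟩
  have hne : X i0 ≠ X i1 := hinj _ _ h01
  have hrs : rankScore X i0 ≠ rankScore X i1 := by
    rcases lt_or_gt_of_ne hne with h | h
    · exact (rankScore_lt X h).ne
    · exact (rankScore_lt X h).ne'
  have hcne : centredRankScore X i0 ≠ centredRankScore X i1 := by
    simp only [centredRankScore]
    intro h; exact hrs (by linarith [sub_left_injective.eq_iff.mp h])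
  rcases eq_or_ne (centredRankScore X i0) 0 with h0 | h0
  · have h1 : centredRankScore X i1 ≠ 0 := fun e => hcne (h0.trans e.symm)
    exact Finset.sum_pos' (fun k _ => sq_nonneg _)
      ⟨i1, Finset.mem_univ _, by positivity⟩
  · exact Finset.sum_pos' (fun k _ => sq_nonneg _)
      ⟨i0, Finset.mem_univ _, by positivity⟩

lemma centredRankScore_comp_perm {N : ℕ} (Y : Fin N → ℝ) (σ : Equiv.Perm (Fin N)) (k : Fin N) :
    centredRankScore (Y ∘ σ) k = centredRankScore Y (σ k) := by
  have hks : ∀ a b, kemenyScore (Y ∘ σ) a b = kemenyScore Y (σ a) (σ b) := by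
    intro a b
    simp only [kemenyScore, Function.comp_apply, EmbeddingLike.apply_eq_iff_eq]
  have hrs : ∀ a, rankScore (Y ∘ σ) a = rankScore Y (σ a) := by
    intro a
    simp only [rankScore, hks]
    exact Fintype.sum_equiv σ _ _ (fun l => rfl)
  have he : (∑ x, rankScore Y (σ x)) = ∑ l, rankScore Y l :=
    Fintype.sum_equiv σ _ _ (fun l => rfl)
  simp only [centredRankScore, hrs, he]

lemma sum_perm_rhoKemeny {N : ℕ} (hN : 2 ≤ N) (X Y : Fin N → ℝ) :
    ∑ σ : Equiv.Perm (Fin N), rhoKemeny X (Y ∘ σ) = 0 := by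
  have hN0 : 0 < N := by omega
  set a := centredRankScore X
  set b := centredRankScore Y
  have hden : ∀ σ : Equiv.Perm (Fin N),
      (Real.sqrt (∑ k, centredRankScore X k ^ 2) *
        Real.sqrt (∑ k, centredRankScore (Y ∘ σ) k ^ 2))
      = Real.sqrt (∑ k, a k ^ 2) * Real.sqrt (∑ k, b k ^ 2) := by
    intro σ
    congr 2
    simp only [centredRankScore_comp_perm]
    exact Fintype.sum_equiv σ _ _ (fun l => rfl)
  set D := Real.sqrt (∑ k, a k ^ 2) * Real.sqrt (∑ k, b k ^ 2) with hD
  have hrho : ∀ σ : Equiv.Perm (Fin N),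
      rhoKemeny X (Y ∘ σ) = (∑ k, a k * b (σ k)) / D := by
    intro σ
    rw [rhoKemeny, hden σ]
    congr 1
    exact Finset.sum_congr rfl fun k _ => by rw [centredRankScore_comp_perm]
  simp only [hrho, ← Finset.sum_div]
  rw [div_eq_zero_iff]
  left
  rw [Finset.sum_comm]
  have hc : ∀ k : Fin N, (∑ σ : Equiv.Perm (Fin N), b (σ k))
      = ∑ σ : Equiv.Perm (Fin N), b (σ ⟨0, hN0⟩) := by
    intro k
    apply Fintype.sum_bijective (fun σ => σ * Equiv.swap k ⟨0, hN0⟩)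
      (Group.mulRight_bijective _)
    intro σ
    simp [Equiv.swap_apply_right]
  calc ∑ k, ∑ σ : Equiv.Perm (Fin N), a k * b (σ k)
      = ∑ k, a k * ∑ σ : Equiv.Perm (Fin N), b (σ ⟨0, hN0⟩) := by
        refine Finset.sum_congr rfl fun k _ => ?_
        rw [← Finset.mul_sum, hc k]
    _ = (∑ k, a k) * ∑ σ : Equiv.Perm (Fin N), b (σ ⟨0, hN0⟩) := by
        rw [Finset.sum_mul]
    _ = 0 := by rw [sum_centredRankScore hN0]; ring

/-! ### Measurability and boundedness -/

lemma measurable_kemenyScore {N : ℕ} (k l : Fin N) :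
    Measurable (fun X : Fin N → ℝ => kemenyScore X k l) := by
  unfold kemenyScore
  by_cases h : k = l
  · simp only [if_pos h]; exact measurable_const
  · simp only [if_neg h]
    exact Measurable.ite (measurableSet_le (measurable_pi_apply l) (measurable_pi_apply k))
      measurable_const measurable_const

lemma measurable_centredRankScore {N : ℕ} (k : Fin N) :
    Measurable (fun X : Fin N → ℝ => centredRankScore X k) := by
  have hrs : ∀ j : Fin N, Measurable (fun X : Fin N → ℝ => rankScore X j) := by
    intro j
    exact Finset.measurable_sum _ (fun l _ => measurable_kemenyScore j l)
  exact ((hrs k).sub ((Finset.measurable_sum _ fun l _ => hrs l).div_const _))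

lemma measurable_rhoKemeny {N : ℕ} :
    Measurable (fun p : (Fin N → ℝ) × (Fin N → ℝ) => rhoKemeny p.1 p.2) := by
  have h1 : ∀ k : Fin N, Measurable
      (fun p : (Fin N → ℝ) × (Fin N → ℝ) => centredRankScore p.1 k) :=
    fun k => (measurable_centredRankScore k).comp measurable_fst
  have h2 : ∀ k : Fin N, Measurable
      (fun p : (Fin N → ℝ) × (Fin N → ℝ) => centredRankScore p.2 k) :=
    fun k => (measurable_centredRankScore k).comp measurable_snd
  apply Measurable.div
  · exact Finset.measurable_sum _ fun k _ => (h1 k).mul (h2 k)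
  · exact ((Real.continuous_sqrt.measurable.comp
        (Finset.measurable_sum _ fun k _ => (h1 k).pow_const 2)).mul
      (Real.continuous_sqrt.measurable.comp
        (Finset.measurable_sum _ fun k _ => (h2 k).pow_const 2)))

lemma Measurable.rhoKemeny_comp {α : Type*} [MeasurableSpace α] {N : ℕ}
    {f h : α → Fin N → ℝ} (hf : Measurable f) (hh : Measurable h) :
    Measurable fun a => rhoKemeny (f a) (h a) := by
  simpa [Function.comp_def] using measurable_rhoKemeny.comp (hf.prodMk hh)

lemma abs_rhoKemeny_le_one {N : ℕ} (X Y : Fin N → ℝ) : |rhoKemeny X Y| ≤ 1 := by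
  set a := centredRankScore X
  set b := centredRankScore Y
  have hCS : (∑ k, a k * b k) ^ 2 ≤ (∑ k, a k ^ 2) * ∑ k, b k ^ 2 :=
    Finset.sum_mul_sq_le_sq_mul_sq Finset.univ a b
  have hA : (0:ℝ) ≤ ∑ k, a k ^ 2 := Finset.sum_nonneg fun k _ => sq_nonneg _
  have hnum : |∑ k, a k * b k| ≤ Real.sqrt (∑ k, a k ^ 2) * Real.sqrt (∑ k, b k ^ 2) := by
    rw [← Real.sqrt_mul hA, ← Real.sqrt_sq_eq_abs]
    exact Real.sqrt_le_sqrt hCS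
  rw [rhoKemeny, abs_div]
  rcases eq_or_lt_of_le (mul_nonneg (Real.sqrt_nonneg _) (Real.sqrt_nonneg _)) with hD | hD
  · rw [← hD]; simp
  · rw [abs_of_pos hD, div_le_one hD]
    exact hnum

/-! ### Probabilistic lemmas -/

lemma map_perm_eq {Ω : Type*} [MeasurableSpace Ω] {P : Measure Ω} [IsProbabilityMeasure P]
    {N : ℕ} (Y : Fin N → Ω → ℝ) (hm : ∀ i, Measurable (Y i))
    (hind : iIndepFun Y P)
    (hid : ∀ i j, IdentDistrib (Y i) (Y j) P P) (σ : Equiv.Perm (Fin N)) :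
    P.map (fun ω => fun i => Y (σ i) ω) = P.map (fun ω => fun i => Y i ω) := by
  have hvec : Measurable (fun ω => fun i => Y i ω) :=
    measurable_pi_lambda _ fun i => hm i
  have hvecσ : Measurable (fun ω => fun i => Y (σ i) ω) :=
    measurable_pi_lambda _ fun i => hm (σ i)
  have hprod : ∀ (s : Fin N → Set ℝ), (∀ i, MeasurableSet (s i)) →
      P (⋂ i, Y i ⁻¹' s i) = ∏ i, P (Y i ⁻¹' s i) := by
    intro s hs
    have := hind.measure_inter_preimage_eq_mul Finset.univ (sets := s) (fun i _ => hs i)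
    simpa using this
  refine ext_of_generate_finite _ generateFrom_pi.symm isPiSystem_pi ?_ ?_
  · rintro _ ⟨s, hs, rfl⟩
    have hsm : ∀ i, MeasurableSet (s i) := fun i => hs i (Set.mem_univ i)
    have hmeasset : MeasurableSet (Set.pi Set.univ s) := MeasurableSet.univ_pi hsm
    rw [Measure.map_apply hvecσ hmeasset, Measure.map_apply hvec hmeasset]
    have h1 : (fun ω => fun i => Y (σ i) ω) ⁻¹' Set.pi Set.univ s
        = ⋂ i, Y i ⁻¹' s (σ.symm i) := by
      ext ω
      simp only [Set.mem_preimage, Set.mem_pi, Set.mem_univ, forall_true_left,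
        Set.mem_iInter]
      constructor
      · intro h i; have := h (σ.symm i); simpa using this
      · intro h i; have := h (σ i); simpa using this
    have h2 : (fun ω => fun i => Y i ω) ⁻¹' Set.pi Set.univ s = ⋂ i, Y i ⁻¹' s i := by
      ext ω
      simp [Set.mem_pi]
    rw [h1, h2, hprod _ (fun i => hsm (σ.symm i)), hprod _ hsm]
    calc ∏ i, P (Y i ⁻¹' s (σ.symm i))
        = ∏ i, P (Y (σ i) ⁻¹' s i) := (Fintype.prod_equiv σ _ _ (fun i => by simp)).symm
      _ = ∏ i, P (Y i ⁻¹' s i) := by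
          refine Finset.prod_congr rfl fun i _ => ?_
          exact (hid (σ i) i).measure_mem_eq (hsm i)
  · have h1 : IsProbabilityMeasure (P.map (fun ω => fun i => Y (σ i) ω)) :=
      Measure.isProbabilityMeasure_map hvecσ.aemeasurable
    have h2 : IsProbabilityMeasure (P.map (fun ω => fun i => Y i ω)) :=
      Measure.isProbabilityMeasure_map hvec.aemeasurable
    simp [measure_univ]

lemma meas_eq_zero_of_indep_atomless {Ω : Type*} [MeasurableSpace Ω] {P : Measure Ω}
    [IsProbabilityMeasure P] {f g : Ω → ℝ} (hf : Measurable f) (hg : Measurable g)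
    (hind : IndepFun f g P) (hatom : ∀ a : ℝ, P {ω | g ω = a} = 0) :
    P {ω | f ω = g ω} = 0 := by
  have hmap : P.map (fun ω => (f ω, g ω)) = (P.map f).prod (P.map g) :=
    (indepFun_iff_map_prod_eq_prod_map_map hf.aemeasurable hg.aemeasurable).mp hind
  have hdiag : MeasurableSet {p : ℝ × ℝ | p.1 = p.2} :=
    measurableSet_eq_fun measurable_fst measurable_snd
  have h1 : P {ω | f ω = g ω}
      = (P.map (fun ω => (f ω, g ω))) {p : ℝ × ℝ | p.1 = p.2} := by
    rw [Measure.map_apply (hf.prodMk hg) hdiag]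
    rfl
  rw [h1, hmap, Measure.prod_apply hdiag]
  have hz : ∀ x : ℝ, (P.map g) (Prod.mk x ⁻¹' {p : ℝ × ℝ | p.1 = p.2}) = 0 := by
    intro x
    have hpre : (Prod.mk x ⁻¹' {p : ℝ × ℝ | p.1 = p.2}) = {x} := by
      ext y; simp [eq_comm]
    rw [hpre, Measure.map_apply hg (measurableSet_singleton x)]
    exact hatom x
  calc ∫⁻ x, (P.map g) (Prod.mk x ⁻¹' {p : ℝ × ℝ | p.1 = p.2}) ∂(P.map f)
      = ∫⁻ _, 0 ∂(P.map f) := by simp only [hz]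
    _ = 0 := lintegral_zero

/-! ### Main theorem -/

theorem expectation_rhoKemeny_eq_zero_under_independence
    {N : ℕ} (hN : 2 ≤ N)
    {Ω : Type*} [MeasurableSpace Ω] (P : Measure Ω) [IsProbabilityMeasure P]
    (X Y : Fin N → Ω → ℝ)
    (hXmeas : ∀ i, Measurable (X i)) (hYmeas : ∀ i, Measurable (Y i))
    (hXindep : iIndepFun X P)
    (hYindep : iIndepFun Y P)
    (hXid : ∀ i j, IdentDistrib (X i) (X j) P P)
    (hYid : ∀ i j, IdentDistrib (Y i) (Y j) P P)
    (hXatomless : ∀ i, ∀ a : ℝ, P {ω | X i ω = a} = 0)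
    (hYatomless : ∀ i, ∀ a : ℝ, P {ω | Y i ω = a} = 0)
    (hXY : IndepFun (fun ω => fun i => X i ω) (fun ω => fun i => Y i ω) P) :
    (∀ᵐ ω ∂P,
        Real.sqrt (∑ k, centredRankScore (fun i => X i ω) k ^ 2) ≠ 0 ∧
        Real.sqrt (∑ k, centredRankScore (fun i => Y i ω) k ^ 2) ≠ 0) ∧
    ∫ ω, rhoKemeny (fun i => X i ω) (fun i => Y i ω) ∂P = 0 := by
  -- distinctness a.e.
  have hdistinct : ∀ (Z : Fin N → Ω → ℝ), (∀ i, Measurable (Z i)) →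
      (iIndepFun Z P) →
      (∀ i, ∀ a : ℝ, P {ω | Z i ω = a} = 0) →
      ∀ᵐ ω ∂P, ∀ i j : Fin N, i ≠ j → Z i ω ≠ Z j ω := by
    intro Z hm hind hatom
    rw [ae_all_iff]
    intro i
    rw [ae_all_iff]
    intro j
    rcases eq_or_ne i j with rfl | hij
    · filter_upwards with ω h; exact absurd rfl h
    · have h0 : P {ω | Z i ω = Z j ω} = 0 :=
        meas_eq_zero_of_indep_atomless (hm i) (hm j) (hind.indepFun hij) (hatom j)
      have : ∀ᵐ ω ∂P, Z i ω ≠ Z j ω := by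
        rw [ae_iff]
        convert h0 using 1
        congr 1
        ext ω
        simp
      filter_upwards [this] with ω h _
      exact h
  have haeX := hdistinct X hXmeas hXindep hXatomless
  have haeY := hdistinct Y hYmeas hYindep hYatomless
  constructor
  · filter_upwards [haeX, haeY] with ω hX' hY'
    constructor
    · exact (Real.sqrt_pos.mpr (sum_sq_centred_pos hN (fun i j h => hX' i j h))).ne'
    · exact (Real.sqrt_pos.mpr (sum_sq_centred_pos hN (fun i j h => hY' i j h))).ne'
  -- expectation part
  · set Xv : Ω → (Fin N → ℝ) := fun ω => fun i => X i ω with hXv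
    set Yv : Ω → (Fin N → ℝ) := fun ω => fun i => Y i ω with hYv
    have hXvm : Measurable Xv := measurable_pi_lambda _ fun i => hXmeas i
    have hYvm : Measurable Yv := measurable_pi_lambda _ fun i => hYmeas i
    set μ := P.map Xv with hμ
    set ν := P.map Yv with hν
    have hg : Measurable (fun p : (Fin N → ℝ) × (Fin N → ℝ) => rhoKemeny p.1 p.2) :=
      measurable_rhoKemeny (N := N)
    -- for each σ, law of (Xv, Yv ∘ σ) is μ.prod ν
    have hTσ : ∀ σ : Equiv.Perm (Fin N),
        Measurable (fun y : Fin N → ℝ => y ∘ σ) :=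
      fun σ => measurable_pi_lambda _ fun i => measurable_pi_apply (σ i)
    have hlaw : ∀ σ : Equiv.Perm (Fin N),
        P.map (fun ω => (Xv ω, Yv ω ∘ σ)) = μ.prod ν := by
      intro σ
      have hYσm : Measurable (fun ω => Yv ω ∘ σ) := (hTσ σ).comp hYvm
      have hindσ : IndepFun Xv (fun ω => Yv ω ∘ σ) P :=
        hXY.comp measurable_id (hTσ σ)
      have h1 : P.map (fun ω => (Xv ω, Yv ω ∘ σ))
          = μ.prod (P.map (fun ω => Yv ω ∘ σ)) :=
        (indepFun_iff_map_prod_eq_prod_map_map hXvm.aemeasurable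
          hYσm.aemeasurable).mp hindσ
      have h2 : P.map (fun ω => Yv ω ∘ σ) = ν := by
        have : (fun ω => Yv ω ∘ σ) = (fun ω => fun i => Y (σ i) ω) := rfl
        rw [this]
        exact map_perm_eq Y hYmeas hYindep hYid σ
      rw [h1, h2]
    -- each integral equals the integral against μ.prod ν
    have hint : ∀ σ : Equiv.Perm (Fin N),
        ∫ ω, rhoKemeny (Xv ω) (Yv ω ∘ σ) ∂P = ∫ p, rhoKemeny p.1 p.2 ∂(μ.prod ν) := by
      intro σ
      have hpm : Measurable (fun ω => (Xv ω, Yv ω ∘ σ)) :=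
        hXvm.prodMk ((hTσ σ).comp hYvm)
      rw [← hlaw σ, integral_map hpm.aemeasurable hg.aestronglyMeasurable]
    -- the target integral also equals ∫ g d(μ.prod ν)
    have htarget : ∫ ω, rhoKemeny (fun i => X i ω) (fun i => Y i ω) ∂P
        = ∫ p, rhoKemeny p.1 p.2 ∂(μ.prod ν) := by
      have hpm : Measurable (fun ω => (Xv ω, Yv ω)) := hXvm.prodMk hYvm
      have h1 : P.map (fun ω => (Xv ω, Yv ω)) = μ.prod ν :=
        (indepFun_iff_map_prod_eq_prod_map_map hXvm.aemeasurable
          hYvm.aemeasurable).mp hXY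
      rw [← h1, integral_map hpm.aemeasurable hg.aestronglyMeasurable]
    -- integrability
    have hinteg : ∀ σ : Equiv.Perm (Fin N),
        Integrable (fun ω => rhoKemeny (Xv ω) (Yv ω ∘ σ)) P := by
      intro σ
      have hYσm : Measurable (fun ω => Yv ω ∘ σ) := (hTσ σ).comp hYvm
      have hpm : Measurable (fun ω => rhoKemeny (Xv ω) (Yv ω ∘ σ)) :=
        hXvm.rhoKemeny_comp hYσm
      refine Integrable.mono' (integrable_const 1) hpm.aestronglyMeasurable ?_
      filter_upwards with ω
      exact abs_rhoKemeny_le_one _ _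
    -- sum over permutations
    have hsum : (Fintype.card (Equiv.Perm (Fin N)) : ℝ) * ∫ p, rhoKemeny p.1 p.2 ∂(μ.prod ν) = 0 := by
      calc (Fintype.card (Equiv.Perm (Fin N)) : ℝ) * ∫ p, rhoKemeny p.1 p.2 ∂(μ.prod ν)
          = ∑ _σ : Equiv.Perm (Fin N), ∫ p, rhoKemeny p.1 p.2 ∂(μ.prod ν) := by
            rw [Finset.sum_const, card_univ, nsmul_eq_mul]
        _ = ∑ σ : Equiv.Perm (Fin N), ∫ ω, rhoKemeny (Xv ω) (Yv ω ∘ σ) ∂P := by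
            exact Finset.sum_congr rfl fun σ _ => (hint σ).symm
        _ = ∫ ω, ∑ σ : Equiv.Perm (Fin N), rhoKemeny (Xv ω) (Yv ω ∘ σ) ∂P :=
            (integral_finset_sum _ fun σ _ => hinteg σ).symm
        _ = ∫ ω, (0:ℝ) ∂P := by
            refine integral_congr_ae ?_
            filter_upwards with ω
            exact sum_perm_rhoKemeny hN (Xv ω) (Yv ω)
        _ = 0 := integral_zero _ _
    have hcard : (Fintype.card (Equiv.Perm (Fin N)) : ℝ) ≠ 0 := by
      simp [Fintype.card_ne_zero]
    rw [htarget]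
    exact (mul_eq_zero.mp hsum).resolve_left hcard
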